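/- The number of reduced and cyclically reduced words of length ℓ ≥ 1 in the free group of rank g equals (2g−1)^ℓ + 1 if ℓ is odd, and (2g−1)^ℓ + (2g−1) if ℓ is even. -/

import Mathlib

/-- `a` and `b` are mutually inverse letters. -/
def IsInvPair {α : Type*} (a b : α × Bool) : Prop := a.1 = b.1 ∧ a.2 = !b.2

/-- A word is freely reduced if no two adjacent letters are mutually inverse. -/
def FreelyRed {α : Type*} (l : List (α × Bool)) : Prop :=
  l.Chain' fun a b => ¬ IsInvPair a b

/-- A word is cyclically reduced (given free reduction) if its first and last
letters are not mutually inverse. -/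
def CyclRedWord {α : Type*} (l : List (α × Bool)) : Prop :=
  ∀ a b, l.head? = some a → l.getLast? = some b → ¬ IsInvPair a b

namespace CRW

abbrev A (g : ℕ) := Fin g × Bool

def inv {g : ℕ} (a : A g) : A g := (a.1, !a.2)

@[simp] lemma inv_inv {g : ℕ} (a : A g) : inv (inv a) = a := by simp [inv]

lemma isInvPair_iff {g : ℕ} (a b : A g) : IsInvPair a b ↔ b = inv a := by
  constructor
  · rintro ⟨h1, h2⟩
    cases a; cases b
    simp only [inv]
    simp_all
  · rintro rfl
    exact ⟨rfl, by simp [inv]⟩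

lemma inv_eq_iff {g : ℕ} {a b : A g} : inv a = b ↔ a = inv b := by
  constructor <;> rintro rfl <;> simp

lemma ne_inv_self {g : ℕ} (a : A g) : a ≠ inv a := by
  intro h
  have := congrArg Prod.snd h
  simp [inv] at this

instance {g : ℕ} (a b : A g) : Decidable (IsInvPair a b) :=
  decidable_of_iff _ (isInvPair_iff a b).symm

instance {g : ℕ} : DecidablePred (FreelyRed (α := Fin g)) := fun _ => by
  unfold FreelyRed List.Chain'; infer_instance

def wordsF (g n : ℕ) : Finset (List (A g)) :=
  (Finset.univ : Finset (List.Vector (A g) n)).image List.Vector.toList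

lemma mem_wordsF {g n : ℕ} {l : List (A g)} : l ∈ wordsF g n ↔ l.length = n := by
  simp only [wordsF, Finset.mem_image, Finset.mem_univ, true_and]
  constructor
  · rintro ⟨v, rfl⟩; exact v.2
  · rintro rfl; exact ⟨⟨l, rfl⟩, rfl⟩

def R (g n : ℕ) : Finset (List (A g)) := (wordsF g n).filter FreelyRed

lemma mem_R {g n : ℕ} {l : List (A g)} : l ∈ R g n ↔ l.length = n ∧ FreelyRed l := by
  simp [R, mem_wordsF]

/-- cyclically reduced words -/
def CF (g n : ℕ) : Finset (List (A g)) :=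
  (R g n).filter (fun l => ¬ l.getLast? = l.head?.map inv)

def BF (g n : ℕ) : Finset (List (A g)) :=
  (R g n).filter (fun l => l.getLast? = l.head?.map inv)

def GF (g n : ℕ) : Finset (List (A g)) :=
  (R g n).filter (fun l => l.getLast? = l.head?)

def NGF (g n : ℕ) : Finset (List (A g)) :=
  (R g n).filter (fun l => ¬ l.getLast? = l.head?)

lemma okk {g : ℕ} {o : Option (A g)} {a : A g} :
    (∀ x ∈ o, ¬ IsInvPair x a) ↔ o ≠ some (inv a) := by
  cases o with
  | none => simp
  | some x =>
    simp only [Option.mem_def, Option.some.injEq, forall_eq', ne_eq, isInvPair_iff]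
    constructor
    · intro h h2; exact h (by rw [h2]; simp)
    · intro h h2; exact h (by rw [h2]; simp)

lemma freelyRed_concat {g : ℕ} {l : List (A g)} {a : A g} :
    FreelyRed (l ++ [a]) ↔ FreelyRed l ∧ l.getLast? ≠ some (inv a) := by
  unfold FreelyRed List.Chain'
  rw [List.isChain_append]
  simp only [List.isChain_singleton, true_and, List.head?_cons, Option.mem_def,
    Option.some.injEq, forall_eq']
  rw [← okk]
  tauto

lemma head?_append_singleton {g : ℕ} {l : List (A g)} (h : l ≠ []) (a : A g) :
    (l ++ [a]).head? = l.head? := by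
  cases l with
  | nil => exact absurd rfl h
  | cons b t => simp

lemma head?_dropLast {g : ℕ} {l : List (A g)} (h : 2 ≤ l.length) :
    l.dropLast.head? = l.head? := by
  match l with
  | x :: y :: t => simp

/-- decomposition of reduced words of length n+1 -/
lemma R_succ (g n : ℕ) : R g (n + 1) =
    (R g n).biUnion (fun l =>
      (Finset.univ.filter (fun a => l.getLast? ≠ some (inv a))).image (fun a => l ++ [a])) := by
  ext l'
  simp only [mem_R, Finset.mem_biUnion, Finset.mem_image, Finset.mem_filter, Finset.mem_univ,
    true_and]
  constructor
  · rintro ⟨hlen, hred⟩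
    have hne : l' ≠ [] := by intro h; rw [h] at hlen; simp at hlen
    have hdec := List.dropLast_append_getLast hne
    have hred' : FreelyRed (l'.dropLast ++ [l'.getLast hne]) := by rw [hdec]; exact hred
    rw [freelyRed_concat] at hred'
    refine ⟨l'.dropLast, ⟨?_, hred'.1⟩, l'.getLast hne, hred'.2, hdec⟩
    rw [List.length_dropLast, hlen]; rfl
  · rintro ⟨l, ⟨hlen, hred⟩, a, ha, rfl⟩
    refine ⟨by simp [hlen], ?_⟩
    rw [freelyRed_concat]; exact ⟨hred, ha⟩

lemma card_filter_ok {g : ℕ} (_hg : 1 ≤ g) (x : A g) :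
    (Finset.univ.filter (fun a : A g => (some x : Option (A g)) ≠ some (inv a))).card
      = 2 * g - 1 := by
  have : (Finset.univ.filter (fun a : A g => (some x : Option (A g)) ≠ some (inv a)))
      = Finset.univ.erase (inv x) := by
    ext a
    simp only [Finset.mem_filter, Finset.mem_univ, true_and, Finset.mem_erase, and_true, ne_eq,
      Option.some.injEq]
    constructor
    · intro h h2; exact h (by rw [h2]; simp)
    · intro h h2; exact h (by rw [h2]; simp)
  rw [this, Finset.card_erase_of_mem (Finset.mem_univ _)]
  have : Fintype.card (A g) = 2 * g := by simp [mul_comm]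
  rw [Finset.card_univ, this]

lemma card_R_succ {g : ℕ} (hg : 1 ≤ g) {n : ℕ} (hn : 1 ≤ n) :
    (R g (n + 1)).card = (R g n).card * (2 * g - 1) := by
  rw [R_succ]
  rw [Finset.card_biUnion]
  · rw [Finset.sum_congr rfl (fun l hl => ?_), Finset.sum_const, smul_eq_mul]
    rw [mem_R] at hl
    have hne : l ≠ [] := by intro h; rw [h] at hl; simp at hl; omega
    have := List.getLast?_eq_getLast hne
    rw [Finset.card_image_of_injective _ (fun a b h => by simpa using List.append_inj h rfl)]
    rw [this, card_filter_ok hg]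
  · intro x hx y hy hxy
    rw [Function.onFun, Finset.disjoint_left]
    rintro z hz1 hz2
    simp only [Finset.mem_image, Finset.mem_filter, Finset.mem_univ, true_and] at hz1 hz2
    obtain ⟨a, _, rfl⟩ := hz1
    obtain ⟨b, _, hab⟩ := hz2
    rw [Finset.mem_coe, mem_R] at hx hy
    exact hxy ((List.append_inj hab (by rw [hx.1, hy.1])).1.symm)

lemma card_R_one {g : ℕ} : (R g 1).card = 2 * g := by
  have : R g 1 = wordsF g 1 := by
    rw [R, Finset.filter_true_of_mem]
    intro l hl
    rw [mem_wordsF] at hl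
    match l with
    | [a] => exact List.isChain_singleton a
  rw [this, wordsF, Finset.card_image_of_injective _ List.Vector.toList_injective,
    Finset.card_univ, card_vector]
  simp [mul_comm]

lemma card_R {g : ℕ} (hg : 1 ≤ g) {n : ℕ} (hn : 1 ≤ n) :
    (R g n).card = 2 * g * (2 * g - 1) ^ (n - 1) := by
  induction n with
  | zero => omega
  | succ m ih =>
    rcases Nat.eq_or_lt_of_le hn with h | h
    · rw [← h]; simpa using card_R_one
    · have hm : 1 ≤ m := by omega
      rw [card_R_succ hg hm, ih hm]
      have : m + 1 - 1 = (m - 1) + 1 := by omega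
      rw [this, pow_succ, mul_assoc]

/-- Bad words of length n+1 biject with reduced words of length n whose last ≠ head. -/
lemma card_BF {g : ℕ} [NeZero g] {n : ℕ} (hn : 1 ≤ n) :
    (BF g (n + 1)).card = (NGF g n).card := by
  have hi : ∀ l ∈ BF g (n + 1), l.dropLast ∈ NGF g n := by
    intro l hl
    simp only [BF, Finset.mem_filter, mem_R] at hl
    obtain ⟨⟨hlen, hred⟩, hbad⟩ := hl
    have hne : l ≠ [] := by intro h; rw [h] at hlen; simp at hlen
    have h2 : 2 ≤ l.length := by omega
    have hdec := List.dropLast_append_getLast hne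
    have hred' : FreelyRed (l.dropLast ++ [l.getLast hne]) := by rw [hdec]; exact hred
    rw [freelyRed_concat] at hred'
    simp only [NGF, Finset.mem_filter, mem_R]
    refine ⟨⟨by rw [List.length_dropLast, hlen]; omega, hred'.1⟩, ?_⟩
    have hh : l.dropLast.head? = l.head? := head?_dropLast h2
    have hhead : l.head? = some (l.head hne) := List.head?_eq_head hne
    have hlast : l.getLast? = some (l.getLast hne) := List.getLast?_eq_getLast hne
    rw [hlast, hhead] at hbad
    have hgl : l.getLast hne = inv (l.head hne) := by simpa using hbad
    rw [hh, hhead]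
    intro hcon
    apply hred'.2
    rw [hcon, hgl]
    simp
  have hj : ∀ l ∈ NGF g n, l ++ [inv l.headI] ∈ BF g (n + 1) := by
    intro l hl
    simp only [NGF, Finset.mem_filter, mem_R] at hl
    obtain ⟨⟨hlen, hred⟩, hng⟩ := hl
    have hne : l ≠ [] := by intro h; rw [h] at hlen; simp at hlen; omega
    have hhead : l.head? = some (l.head hne) := List.head?_eq_head hne
    have hheadI : l.headI = l.head hne := by
      match l, hne with
      | a :: t, _ => rfl
    simp only [BF, Finset.mem_filter, mem_R]
    refine ⟨⟨by simp [hlen], ?_⟩, ?_⟩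
    · rw [freelyRed_concat]
      refine ⟨hred, ?_⟩
      intro hcon
      apply hng
      rw [hcon, hhead, hheadI]
      simp
    · rw [List.getLast?_concat, head?_append_singleton hne, hhead, hheadI]
      simp
  refine Finset.card_bij' (fun l _ => l.dropLast) (fun l _ => l ++ [inv l.headI]) hi hj ?_ ?_
  · intro l hl
    simp only [BF, Finset.mem_filter, mem_R] at hl
    obtain ⟨⟨hlen, hred⟩, hbad⟩ := hl
    have hne : l ≠ [] := by intro h; rw [h] at hlen; simp at hlen
    have h2 : 2 ≤ l.length := by omega
    have hdne : l.dropLast ≠ [] := by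
      intro h
      have h3 := List.length_dropLast (xs := l)
      rw [h] at h3; simp at h3; omega
    have hhead : l.head? = some (l.head hne) := List.head?_eq_head hne
    have hlast : l.getLast? = some (l.getLast hne) := List.getLast?_eq_getLast hne
    rw [hlast, hhead] at hbad
    have hgl : l.getLast hne = inv (l.head hne) := by simpa using hbad
    have hheadI : l.dropLast.headI = l.head hne := by
      have h1 : l.dropLast.head? = some l.dropLast.headI := by
        match hd : l.dropLast, hdne with
        | a :: t, _ => rfl
      have h2' := head?_dropLast h2
      rw [h1, hhead] at h2'
      simpa using h2'
    show l.dropLast ++ [inv l.dropLast.headI] = l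
    rw [hheadI, ← hgl]
    exact List.dropLast_append_getLast hne
  · intro l _
    exact List.dropLast_concat

lemma card_GF {g : ℕ} [NeZero g] {n : ℕ} (hn : 1 ≤ n) :
    (GF g (n + 1)).card = (CF g n).card := by
  have hi : ∀ l ∈ GF g (n + 1), l.dropLast ∈ CF g n := by
    intro l hl
    simp only [GF, Finset.mem_filter, mem_R] at hl
    obtain ⟨⟨hlen, hred⟩, hgood⟩ := hl
    have hne : l ≠ [] := by intro h; rw [h] at hlen; simp at hlen
    have h2 : 2 ≤ l.length := by omega
    have hdec := List.dropLast_append_getLast hne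
    have hred' : FreelyRed (l.dropLast ++ [l.getLast hne]) := by rw [hdec]; exact hred
    rw [freelyRed_concat] at hred'
    simp only [CF, Finset.mem_filter, mem_R]
    refine ⟨⟨by rw [List.length_dropLast, hlen]; omega, hred'.1⟩, ?_⟩
    have hh : l.dropLast.head? = l.head? := head?_dropLast h2
    have hhead : l.head? = some (l.head hne) := List.head?_eq_head hne
    have hlast : l.getLast? = some (l.getLast hne) := List.getLast?_eq_getLast hne
    rw [hlast, hhead] at hgood
    have hgl : l.getLast hne = l.head hne := by simpa using hgood
    rw [hh, hhead]
    intro hcon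
    apply hred'.2
    simp only [Option.map_some] at hcon
    rw [hcon, ← hgl]
  have hj : ∀ l ∈ CF g n, l ++ [l.headI] ∈ GF g (n + 1) := by
    intro l hl
    simp only [CF, Finset.mem_filter, mem_R] at hl
    obtain ⟨⟨hlen, hred⟩, hcyc⟩ := hl
    have hne : l ≠ [] := by intro h; rw [h] at hlen; simp at hlen; omega
    have hhead : l.head? = some (l.head hne) := List.head?_eq_head hne
    have hheadI : l.headI = l.head hne := by
      match l, hne with
      | a :: t, _ => rfl
    simp only [GF, Finset.mem_filter, mem_R]
    refine ⟨⟨by simp [hlen], ?_⟩, ?_⟩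
    · rw [freelyRed_concat]
      refine ⟨hred, ?_⟩
      intro hcon
      apply hcyc
      rw [hcon, hhead, hheadI]
      simp
    · rw [List.getLast?_concat, head?_append_singleton hne, hhead, hheadI]
  refine Finset.card_bij' (fun l _ => l.dropLast) (fun l _ => l ++ [l.headI]) hi hj ?_ ?_
  · intro l hl
    simp only [GF, Finset.mem_filter, mem_R] at hl
    obtain ⟨⟨hlen, hred⟩, hgood⟩ := hl
    have hne : l ≠ [] := by intro h; rw [h] at hlen; simp at hlen
    have h2 : 2 ≤ l.length := by omega
    have hdne : l.dropLast ≠ [] := by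
      intro h
      have h3 := List.length_dropLast (xs := l)
      rw [h] at h3; simp at h3; omega
    have hhead : l.head? = some (l.head hne) := List.head?_eq_head hne
    have hlast : l.getLast? = some (l.getLast hne) := List.getLast?_eq_getLast hne
    rw [hlast, hhead] at hgood
    have hgl : l.getLast hne = l.head hne := by simpa using hgood
    have hheadI : l.dropLast.headI = l.head hne := by
      have h1 : l.dropLast.head? = some l.dropLast.headI := by
        match hd : l.dropLast, hdne with
        | a :: t, _ => rfl
      have h2' := head?_dropLast h2
      rw [h1, hhead] at h2'
      simpa using h2'
    show l.dropLast ++ [l.dropLast.headI] = l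
    rw [hheadI, ← hgl]
    exact List.dropLast_append_getLast hne
  · intro l _
    exact List.dropLast_concat

lemma cf_add_bf {g n : ℕ} : (BF g n).card + (CF g n).card = (R g n).card :=
  Finset.card_filter_add_card_filter_not _

lemma gf_add_ngf {g n : ℕ} : (GF g n).card + (NGF g n).card = (R g n).card :=
  Finset.card_filter_add_card_filter_not _

lemma GF_one {g : ℕ} : GF g 1 = R g 1 := by
  rw [GF, Finset.filter_true_of_mem]
  intro l hl
  rw [mem_R] at hl
  match l, hl with
  | [a], _ => rfl

lemma CF_one {g : ℕ} : CF g 1 = R g 1 := by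
  rw [CF, Finset.filter_true_of_mem]
  intro l hl
  rw [mem_R] at hl
  match l, hl with
  | [a], _ =>
    simp only [List.getLast?_singleton, List.head?_cons, Option.map_some]
    intro h
    exact ne_inv_self a (by simpa using h)

/-- main counting lemma -/
lemma card_CF {g : ℕ} (hg : 1 ≤ g) : ∀ ℓ : ℕ, 1 ≤ ℓ →
    (CF g ℓ).card = if Odd ℓ then (2 * g - 1) ^ ℓ + 1 else (2 * g - 1) ^ ℓ + (2 * g - 1) := by
  haveI : NeZero g := ⟨by omega⟩
  have ht : 1 ≤ 2 * g - 1 := by omega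
  intro ℓ
  induction ℓ using Nat.strong_induction_on with
  | _ ℓ ih =>
    intro hℓ
    match ℓ, hℓ with
    | 1, _ =>
      rw [CF_one, card_R_one]
      simp only [if_pos (by decide : Odd 1), pow_one]
      omega
    | 2, _ =>
      have e1 : (BF g 2).card + (CF g 2).card = (R g 2).card := cf_add_bf
      have e2 : (BF g 2).card = (NGF g 1).card := card_BF le_rfl
      have e3 : (GF g 1).card + (NGF g 1).card = (R g 1).card := gf_add_ngf
      have e4 : (GF g 1).card = (R g 1).card := by rw [GF_one]
      have e5 : (R g 2).card = 2 * g * (2 * g - 1) ^ 1 := card_R hg (by norm_num)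
      have hng : (NGF g 1).card = 0 := by omega
      have : (CF g 2).card = 2 * g * (2 * g - 1) := by
        rw [pow_one] at e5; omega
      rw [this, pow_two]
      simp only [if_neg (by decide : ¬ Odd 2)]
      have h1 : 2 * g - 1 + 1 = 2 * g := by omega
      calc 2 * g * (2 * g - 1) = (2 * g - 1) * (2 * g - 1 + 1) := by rw [h1]; ring
        _ = (2 * g - 1) * (2 * g - 1) + (2 * g - 1) := by ring
    | (k + 3), _ =>
      have hk1 : 1 ≤ k + 1 := by omega
      have ihk := ih (k + 1) (by omega) hk1
      have e1 : (BF g (k + 3)).card + (CF g (k + 3)).card = (R g (k + 3)).card := cf_add_bf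
      have e2 : (BF g (k + 3)).card = (NGF g (k + 2)).card := card_BF (by omega)
      have e3 : (GF g (k + 2)).card + (NGF g (k + 2)).card = (R g (k + 2)).card := gf_add_ngf
      have e4 : (GF g (k + 2)).card = (CF g (k + 1)).card := card_GF hk1
      have r2 : (R g (k + 2)).card = 2 * g * (2 * g - 1) ^ (k + 1) := by
        have := card_R hg (n := k + 2) (by omega); simpa using this
      have r3 : (R g (k + 3)).card = 2 * g * (2 * g - 1) ^ (k + 2) := by
        have := card_R hg (n := k + 3) (by omega); simpa using this
      -- express in powers
      set t := 2 * g - 1 with hts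
      have h2g : 2 * g = t + 1 := by omega
      have p2 : t ^ (k + 2) = t * t ^ (k + 1) := by ring
      have p3 : t ^ (k + 3) = t * t ^ (k + 2) := by ring
      have r2' : (R g (k + 2)).card = t ^ (k + 2) + t ^ (k + 1) := by
        rw [r2, h2g, p2]; ring
      have r3' : (R g (k + 3)).card = t ^ (k + 3) + t ^ (k + 2) := by
        rw [r3, h2g, p3]; ring
      have hodd : Odd (k + 3) ↔ Odd (k + 1) := by
        constructor
        · rintro ⟨m, hm⟩; exact ⟨m - 1, by omega⟩
        · rintro ⟨m, hm⟩; exact ⟨m + 1, by omega⟩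
      by_cases ho : Odd (k + 1)
      · rw [if_pos (hodd.mpr ho)]
        rw [if_pos ho] at ihk
        omega
      · rw [if_neg (fun h => ho (hodd.mp h))]
        rw [if_neg ho] at ihk
        omega

lemma cyclRed_iff {g : ℕ} {l : List (A g)} (hne : l ≠ []) :
    CyclRedWord l ↔ ¬ l.getLast? = l.head?.map inv := by
  have hhead : l.head? = some (l.head hne) := List.head?_eq_head hne
  have hlast : l.getLast? = some (l.getLast hne) := List.getLast?_eq_getLast hne
  constructor
  · intro h hcon
    apply h (l.head hne) (l.getLast hne) hhead hlast
    rw [isInvPair_iff]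
    rw [hlast, hhead] at hcon
    simpa using hcon
  · intro h a b ha hb hpair
    apply h
    rw [hhead] at ha
    rw [hlast] at hb
    rw [isInvPair_iff] at hpair
    simp only [Option.some.injEq] at ha hb
    rw [hlast, hhead, Option.map_some, hb, ha, hpair]

end CRW

open CRW in
theorem count_cyclicallyReduced_words (g ℓ : ℕ) (hg : 1 ≤ g) (hℓ : 1 ≤ ℓ) :
    {l : List (Fin g × Bool) | l.length = ℓ ∧ FreelyRed l ∧ CyclRedWord l}.ncard =
      if Odd ℓ then (2 * g - 1) ^ ℓ + 1 else (2 * g - 1) ^ ℓ + (2 * g - 1) := by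
  have hset : {l : List (Fin g × Bool) | l.length = ℓ ∧ FreelyRed l ∧ CyclRedWord l}
      = ↑(CF g ℓ) := by
    ext l
    simp only [Set.mem_setOf_eq, Finset.coe_filter, CF, mem_R, Set.mem_setOf_eq,
      Finset.mem_coe, Finset.mem_filter]
    constructor
    · rintro ⟨h1, h2, h3⟩
      have hne : l ≠ [] := by intro h; rw [h] at h1; simp at h1; omega
      exact ⟨⟨h1, h2⟩, (cyclRed_iff hne).mp h3⟩
    · rintro ⟨⟨h1, h2⟩, h3⟩
      have hne : l ≠ [] := by intro h; rw [h] at h1; simp at h1; omega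
      exact ⟨h1, h2, (cyclRed_iff hne).mpr h3⟩
  rw [hset, Set.ncard_coe_finset]
  exact card_CF hg ℓ hℓ
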